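/- Let U be a Hopf *-algebra, Z a left U-module *-algebra, χ a linear functional on U, h a linear functional on Z, and ⟨y,x⟩ := h(x* y). If χ(f)⟨y,x⟩ = ⟨f₍₂₎ ▷ y, S(f₍₁₎)* ▷ x⟩ for all f, x, y, then ⟨f ▷ y, x⟩ = χ(f₍₂₎) ⟨y, f₍₁₎* ▷ x⟩ for all f ∈ U and x,y ∈ Z. -/
import Mathlib


open TensorProduct

/-- Every element of a tensor product is a finite sum of simple tensors,
indexed by `Fin n`. -/
theorem TensorProduct.exists_fin_sum {R M N : Type*} [CommSemiring R]
    [AddCommMonoid M] [AddCommMonoid N] [Module R M] [Module R N]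
    (x : M ⊗[R] N) :
    ∃ (n : ℕ) (m : Fin n → M) (p : Fin n → N), x = ∑ i, m i ⊗ₜ[R] p i := by
  induction x with
  | zero => exact ⟨0, ![], ![], by simp⟩
  | tmul u v => exact ⟨1, ![u], ![v], by simp⟩
  | add x y hx hy =>
    obtain ⟨n1, m1, p1, rfl⟩ := hx
    obtain ⟨n2, m2, p2, rfl⟩ := hy
    refine ⟨n1 + n2, Fin.append m1 m2, Fin.append p1 p2, ?_⟩
    rw [Fin.sum_univ_add]
    simp [Fin.append_left, Fin.append_right]

/-- If `χ(f)⟨y,x⟩ = ⟨f₍₂₎ ▷ y, S(f₍₁₎)* ▷ x⟩` holds for all `f, x, y`,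
then `⟨f ▷ y, x⟩ = χ(f₍₂₎) ⟨y, f₍₁₎* ▷ x⟩` for all `f ∈ U` and `x,y ∈ Z`,
where `⟨y,x⟩ = h(x* y)` and Sweedler sums are expressed by quantifying over finite
decompositions of `Δ f`. -/
theorem statement2 {U Z : Type*} [Ring U] [HopfAlgebra ℂ U]
    [StarRing U] [StarModule ℂ U]
    [Ring Z] [Algebra ℂ Z] [StarRing Z] [StarModule ℂ Z]
    (act : U →ₗ[ℂ] Z →ₗ[ℂ] Z)
    (hact_mul : ∀ (f g : U) (z : Z), act (f * g) z = act f (act g z))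
    (hact_one : ∀ z : Z, act 1 z = z)
    (hact_alg : ∀ (f : U) (z w : Z) (n : ℕ) (a b : Fin n → U),
      Coalgebra.comul (R := ℂ) f = ∑ i, a i ⊗ₜ[ℂ] b i →
      act f (z * w) = ∑ i, act (a i) z * act (b i) w)
    (hact_star : ∀ (f : U) (z : Z),
      star (act f z) = act (star (HopfAlgebra.antipode (R := ℂ) f)) (star z))
    (hSstar : ∀ f : U,
      HopfAlgebra.antipode (R := ℂ)
        (star (HopfAlgebra.antipode (R := ℂ) (star f))) = f)
    (hcomul_star : ∀ (f : U) (n : ℕ) (a b : Fin n → U),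
      Coalgebra.comul (R := ℂ) f = ∑ i, a i ⊗ₜ[ℂ] b i →
      Coalgebra.comul (R := ℂ) (star f) = ∑ i, star (a i) ⊗ₜ[ℂ] star (b i))
    (hcounit_star : ∀ f : U,
      Coalgebra.counit (R := ℂ) (star f) = starRingEnd ℂ (Coalgebra.counit (R := ℂ) f))
    (χ : U →ₗ[ℂ] ℂ) (h : Z →ₗ[ℂ] ℂ)
    (hii : ∀ (f : U) (x y : Z) (n : ℕ) (a b : Fin n → U),
      Coalgebra.comul (R := ℂ) f = ∑ i, a i ⊗ₜ[ℂ] b i →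
      χ f * h (star x * y) =
        ∑ i, h (star (act (star (HopfAlgebra.antipode (R := ℂ) (a i))) x) * act (b i) y)) :
    ∀ (f : U) (x y : Z) (n : ℕ) (a b : Fin n → U),
      Coalgebra.comul (R := ℂ) f = ∑ i, a i ⊗ₜ[ℂ] b i →
      h (star x * act f y) = ∑ i, χ (b i) * h (star (act (star (a i)) x) * y) := by
  clear hact_alg hSstar hcomul_star hcounit_star
  intro f x y n a b hcomul
  set S : U →ₗ[ℂ] U := HopfAlgebra.antipode (R := ℂ) with hS
  -- the conjugate-twisted action of `U` on `x`, which is `ℂ`-linear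
  set ψ : U →ₗ[ℂ] Z :=
    { toFun := fun u => star (act (star u) x)
      map_add' := by intro u v; simp [star_add, map_add]
      map_smul' := by intro c u; simp [star_smul, map_smul] } with hψ
  -- the main bilinear pairing
  set B : U →ₗ[ℂ] U →ₗ[ℂ] ℂ :=
    LinearMap.mk₂ ℂ (fun u v => h (ψ u * act v y))
      (fun u u' v => by simp [map_add, add_mul])
      (fun c u v => by simp [map_smul, smul_mul_assoc])
      (fun u v v' => by simp [map_add, mul_add])
      (fun c u v => by simp [map_smul, mul_smul_comm]) with hB
  set Φ : U ⊗[ℂ] U →ₗ[ℂ] ℂ := TensorProduct.lift B with hΦ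
  have hΦt : ∀ u v : U, Φ (u ⊗ₜ[ℂ] v) = h (ψ u * act v y) := fun u v => rfl
  -- choose decompositions of `Δ (b i)`
  choose m p q hp using fun i => TensorProduct.exists_fin_sum
    (Coalgebra.comul (R := ℂ) (b i))
  -- Key tensor identity: ∑ i j, (a i * S (p i j)) ⊗ q i j = 1 ⊗ f
  have hsum : (∑ i, a i ⊗ₜ[ℂ] Coalgebra.comul (R := ℂ) (b i)) =
      (TensorProduct.assoc ℂ U U U)
        ((Coalgebra.comul (R := ℂ)).rTensor U (Coalgebra.comul (R := ℂ) f)) := by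
    rw [Coalgebra.coassoc_apply, hcomul, map_sum]
    simp [LinearMap.lTensor_tmul]
  have heps : (∑ i, Coalgebra.counit (R := ℂ) (a i) • b i) = f := by
    have h1 := Coalgebra.rTensor_counit_comul (R := ℂ) f
    rw [hcomul, map_sum] at h1
    have h2 := congrArg (TensorProduct.lid ℂ U) h1
    simpa using h2
  set A : U ⊗[ℂ] (U ⊗[ℂ] U) →ₗ[ℂ] (U ⊗[ℂ] U) ⊗[ℂ] U :=
    (TensorProduct.assoc ℂ U U U).symm.toLinearMap with hA
  have hAt : ∀ (u v w : U), A (u ⊗ₜ[ℂ] (v ⊗ₜ[ℂ] w)) = (u ⊗ₜ[ℂ] v) ⊗ₜ[ℂ] w := by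
    intro u v w; simp [hA]
  have key : (∑ i, ∑ j, (a i * S (p i j)) ⊗ₜ[ℂ] q i j) = (1 : U) ⊗ₜ[ℂ] f := by
    have step1 : (∑ i, ∑ j, (a i * S (p i j)) ⊗ₜ[ℂ] q i j) =
        ∑ i, (LinearMap.rTensor U (LinearMap.mul' ℂ U ∘ₗ LinearMap.lTensor U S))
          (A (a i ⊗ₜ[ℂ] Coalgebra.comul (R := ℂ) (b i))) := by
      refine Finset.sum_congr rfl fun i _ => ?_
      rw [hp i, TensorProduct.tmul_sum, map_sum, map_sum]
      refine Finset.sum_congr rfl fun j _ => ?_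
      rw [hAt]
      simp [LinearMap.rTensor_tmul, LinearMap.lTensor_tmul, LinearMap.mul'_apply]
    have hAassoc : ∀ t : (U ⊗[ℂ] U) ⊗[ℂ] U, A ((TensorProduct.assoc ℂ U U U) t) = t :=
      fun t => (TensorProduct.assoc ℂ U U U).symm_apply_apply t
    rw [step1, ← map_sum, ← map_sum, hsum, hAassoc,
      ← LinearMap.comp_apply, ← LinearMap.rTensor_comp, hcomul, map_sum]
    have hmid : ∀ i, (LinearMap.rTensor U
        ((LinearMap.mul' ℂ U ∘ₗ LinearMap.lTensor U S) ∘ₗ Coalgebra.comul (R := ℂ)))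
          (a i ⊗ₜ[ℂ] b i) =
        Coalgebra.counit (R := ℂ) (a i) • ((1 : U) ⊗ₜ[ℂ] b i) := by
      intro i
      rw [LinearMap.rTensor_tmul]
      simp only [LinearMap.comp_apply, hS]
      rw [HopfAlgebra.mul_antipode_lTensor_comul_apply,
        Algebra.algebraMap_eq_smul_one, TensorProduct.smul_tmul']
    rw [Finset.sum_congr rfl fun i _ => hmid i, ← heps, TensorProduct.tmul_sum]
    exact Finset.sum_congr rfl fun i _ => by rw [TensorProduct.tmul_smul]
  -- Now compute
  have lhs_eq : h (star x * act f y) = Φ ((1 : U) ⊗ₜ[ℂ] f) := by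
    rw [hΦt]
    have : ψ (1 : U) = star x := by
      simp [hψ, star_one, hact_one]
    rw [this]
  rw [lhs_eq, ← key, map_sum]
  refine Finset.sum_congr rfl fun i _ => ?_
  rw [map_sum]
  have hii' := hii (b i) (act (star (a i)) x) y (m i) (p i) (q i) (hp i)
  rw [hii']
  refine Finset.sum_congr rfl fun j _ => ?_
  rw [hΦt]
  congr 2
  simp only [hψ, LinearMap.coe_mk, AddHom.coe_mk]
  rw [star_mul, hact_mul]
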